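/- If A = I + K where K is a compact operator on a Hilbert space and I + K is invertible, then GMRES applied to A x = b converges superlinearly; in particular, for every ε > 0 there exists N such that the residual after n ≥ N iterations satisfies ‖r_n‖ ≤ ε^n ‖r_0‖. -/

import Mathlib

set_option linter.unusedSectionVars false
set_option maxHeartbeats 1000000

section GmresAux
open Polynomial


open Metric Set
open scoped NNReal

variable {H : Type*} [NormedAddCommGroup H] [InnerProductSpace ℂ H] [CompleteSpace H]

/-- A compact operator cannot send a bounded sequence to a uniformly separated sequence. -/
lemma gmres_aux_no_separated_seq {K : H →L[ℂ] H} (hK : IsCompactOperator K)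
    {x : ℕ → H} (hx : ∀ n, ‖x n‖ ≤ 1) {r : ℝ} (hr : 0 < r)
    (hsep : ∀ m n : ℕ, m < n → r ≤ ‖K (x m) - K (x n)‖) : False := by
  obtain ⟨C, hCcomp, hCsub⟩ := hK.image_closedBall_subset_compact (1 : ℝ)
  have htb := hCcomp.totallyBounded
  rw [Metric.totallyBounded_iff] at htb
  obtain ⟨t, htfin, htcov⟩ := htb (r / 2) (by linarith)
  have hmem : ∀ n, K (x n) ∈ C := fun n =>
    hCsub ⟨x n, by simpa [Metric.mem_closedBall, dist_eq_norm] using hx n, rfl⟩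
  have hchoice : ∀ n : ℕ, ∃ y ∈ t, K (x n) ∈ Metric.ball y (r / 2) := by
    intro n
    have := htcov (hmem n)
    simpa using this
  choose y hyt hyball using hchoice
  haveI : Finite t := htfin
  obtain ⟨m, n, hmn, heq⟩ := Finite.exists_ne_map_eq_of_infinite
    (fun n : ℕ => (⟨y n, hyt n⟩ : t))
  have hd : dist (K (x m)) (K (x n)) < r := by
    have h1 := hyball m
    have h2 := hyball n
    have : y m = y n := congrArg Subtype.val heq
    rw [Metric.mem_ball] at h1 h2
    calc dist (K (x m)) (K (x n)) ≤ dist (K (x m)) (y m) + dist (y n) (K (x n)) := by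
          rw [this]; exact dist_triangle _ _ _
      _ < r / 2 + r / 2 := by rw [dist_comm (y n)]; exact add_lt_add h1 h2
      _ = r := by ring
  rcases hmn.lt_or_gt with h | h
  · exact absurd hd (not_lt.2 (by simpa [dist_eq_norm] using hsep m n h))
  · exact absurd hd (not_lt.2 (by simpa [dist_eq_norm, norm_sub_rev] using hsep n m h))

/-- If `K` is compact, `l ≠ 0`, and `K - l•id` is injective, it is bounded below. -/
lemma gmres_aux_bounded_below {K : H →L[ℂ] H} (hK : IsCompactOperator K) {l : ℂ} (hl : l ≠ 0)
    (hinj : ∀ x : H, K x = l • x → x = 0) :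
    ∃ c : ℝ, 0 < c ∧ ∀ x : H, c * ‖x‖ ≤ ‖K x - l • x‖ := by
  by_contra hc
  push_neg at hc
  have hex : ∀ n : ℕ, ∃ u : H, ‖u‖ = 1 ∧ ‖K u - l • u‖ < 1 / (n + 1) := by
    intro n
    obtain ⟨x, hx⟩ := hc (1 / (n + 1)) (by positivity)
    have hx0 : x ≠ 0 := by
      rintro rfl
      simp at hx
    have hxpos : (0:ℝ) < ‖x‖ := norm_pos_iff.2 hx0
    refine ⟨(‖x‖ : ℂ)⁻¹ • x, ?_, ?_⟩
    · simp [norm_smul, inv_mul_cancel₀ (norm_ne_zero_iff.2 hx0)]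
    · rw [map_smul, smul_comm l, ← smul_sub, norm_smul]
      simp only [norm_inv, Complex.norm_real, norm_norm]
      rw [inv_mul_lt_iff₀ hxpos]
      calc ‖K x - l • x‖ < 1 / (n + 1) * ‖x‖ := hx
        _ = ‖x‖ * (1 / (n+1)) := by ring
  choose u hu1 hu2 using hex
  obtain ⟨C, hCcomp, hCsub⟩ := hK.image_closedBall_subset_compact (1 : ℝ)
  have hmem : ∀ n, K (u n) ∈ C := fun n =>
    hCsub ⟨u n, by simp [Metric.mem_closedBall, dist_eq_norm, (hu1 n).le], rfl⟩
  obtain ⟨y, _, φ, hφ, hty⟩ := hCcomp.isSeqCompact hmem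
  have hT0 : Filter.Tendsto (fun n => K (u n) - l • u n) Filter.atTop (nhds 0) := by
    rw [tendsto_iff_norm_sub_tendsto_zero]
    simp only [sub_zero]
    refine squeeze_zero (fun n => norm_nonneg _) (fun n => (hu2 n).le) ?_
    exact tendsto_one_div_add_atTop_nhds_zero_nat
  have hT0' : Filter.Tendsto (fun n => K (u (φ n)) - l • u (φ n)) Filter.atTop (nhds 0) :=
    hT0.comp hφ.tendsto_atTop
  have hlu : Filter.Tendsto (fun n => l • u (φ n)) Filter.atTop (nhds y) := by
    have := hty.sub hT0'
    simpa using this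
  have huφ : Filter.Tendsto (fun n => u (φ n)) Filter.atTop (nhds (l⁻¹ • y)) := by
    have := hlu.const_smul l⁻¹
    simpa [smul_smul, inv_mul_cancel₀ hl] using this
  set z := l⁻¹ • y with hz
  have hz1 : ‖z‖ = 1 := by
    have : Filter.Tendsto (fun n => ‖u (φ n)‖) Filter.atTop (nhds ‖z‖) := huφ.norm
    have h1 : Filter.Tendsto (fun _ : ℕ => (1:ℝ)) Filter.atTop (nhds ‖z‖) := by
      simpa [hu1] using this
    exact tendsto_nhds_unique h1 tendsto_const_nhds
  have hzT : K z - l • z = 0 := by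
    have hcont : Filter.Tendsto (fun n => K (u (φ n)) - l • u (φ n)) Filter.atTop
        (nhds (K z - l • z)) := by
      exact ((K.continuous.tendsto z).comp huφ).sub (huφ.const_smul l)
    exact tendsto_nhds_unique hcont hT0'
  have : z = 0 := hinj z (by rw [← sub_eq_zero]; exact hzT)
  rw [this] at hz1
  simp at hz1

/-- In a Hilbert space, a strict inclusion of submodules with the smaller one closed admits a unit
vector in the larger one orthogonal to the smaller one. -/
lemma gmres_aux_exists_unit_orth {U W : Submodule ℂ H} (hU : IsClosed (U : Set H)) (hUW : U < W) :
    ∃ x : H, x ∈ W ∧ ‖x‖ = 1 ∧ x ∈ Uᗮ := by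
  haveI : CompleteSpace U := hU.completeSpace_coe
  obtain ⟨w, hwW, hwU⟩ := SetLike.exists_of_lt hUW
  set v := w - (U.orthogonalProjectionOnto w : H) with hv
  have hvU : v ∈ Uᗮ := U.sub_starProjection_mem_orthogonal w
  have hv0 : v ≠ 0 := by
    intro h
    apply hwU
    have : w = (U.orthogonalProjectionOnto w : H) := by rwa [hv, sub_eq_zero] at h
    rw [this]; exact (U.orthogonalProjectionOnto w).2
  have hvW : v ∈ W := W.sub_mem hwW (hUW.le (U.orthogonalProjectionOnto w).2)
  refine ⟨(‖v‖ : ℂ)⁻¹ • v, W.smul_mem _ hvW, ?_, Uᗮ.smul_mem _ hvU⟩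
  simp [norm_smul, inv_mul_cancel₀ (norm_ne_zero_iff.2 hv0)]

/-- Orthogonality gives a lower bound on the norm of a sum. -/
lemma gmres_aux_norm_le_of_orth {x w : H} (h : inner (𝕜 := ℂ) x w = 0) : ‖x‖ ≤ ‖x + w‖ := by
  have := norm_add_sq (𝕜 := ℂ) x w
  rw [h] at this
  simp only [map_zero, mul_zero, add_zero, zero_mul] at this
  nlinarith [norm_nonneg (x + w), norm_nonneg x, sq_nonneg (‖w‖)]

/-- Riesz theory: every nonzero spectral value of a compact operator on a Hilbert space is an
eigenvalue. -/
lemma gmres_aux_eigenvalue_of_mem_spectrum {K : H →L[ℂ] H} (hK : IsCompactOperator K)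
    {l : ℂ} (hl : l ≠ 0) (hspec : l ∈ spectrum ℂ K) : ∃ x : H, x ≠ 0 ∧ K x = l • x := by
  by_contra hno
  push_neg at hno
  have hinj : ∀ x : H, K x = l • x → x = 0 := by
    intro x hx
    by_contra hx0
    exact (hno x hx0) hx
  obtain ⟨c, hc, hcb⟩ := gmres_aux_bounded_below hK hl hinj
  set T : H →L[ℂ] H := K - l • 1 with hT
  have hTapp : ∀ x : H, T x = K x - l • x := by
    intro x; simp [hT]
  have hTb : ∀ x : H, c * ‖x‖ ≤ ‖T x‖ := fun x => by rw [hTapp]; exact hcb x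
  -- lower bounds for powers of T
  have hTnb : ∀ (n : ℕ) (x : H), c ^ n * ‖x‖ ≤ ‖(T ^ n) x‖ := by
    intro n
    induction n with
    | zero => intro x; simp
    | succ n ih =>
      intro x
      have h1 : (T ^ (n + 1)) x = T ((T ^ n) x) := by
        rw [pow_succ']; rfl
      rw [h1]
      calc c ^ (n+1) * ‖x‖ = c * (c ^ n * ‖x‖) := by ring
        _ ≤ c * ‖(T ^ n) x‖ := by
            exact mul_le_mul_of_nonneg_left (ih x) hc.le
        _ ≤ ‖T ((T ^ n) x)‖ := hTb _
  have hTninj : ∀ (n : ℕ) (x : H), (T ^ n) x = 0 → x = 0 := by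
    intro n x hx
    have := hTnb n x
    rw [hx, norm_zero] at this
    have hcn : (0:ℝ) < c ^ n := pow_pos hc n
    have hx0 : ‖x‖ ≤ 0 := by nlinarith [norm_nonneg x]
    exact norm_le_zero_iff.1 hx0
  set V : ℕ → Submodule ℂ H := fun n => LinearMap.range ((T ^ n : H →L[ℂ] H) : H →ₗ[ℂ] H) with hV
  have hVclosed : ∀ n, IsClosed ((V n : Set H)) := by
    intro n
    have hb : ∀ x : H, ‖x‖ ≤ ((c ^ n).toNNReal⁻¹ : ℝ≥0) * ‖(T ^ n) x‖ := by
      intro x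
      have hcn : (0:ℝ) < c ^ n := pow_pos hc n
      have := hTnb n x
      rw [NNReal.coe_inv, Real.coe_toNNReal _ hcn.le]
      rw [inv_mul_eq_div, le_div_iff₀ hcn]
      linarith [this]
    have halip := ContinuousLinearMap.antilipschitz_of_bound (T ^ n) hb
    have := halip.isClosed_range (T ^ n).uniformContinuous
    simp only [hV, LinearMap.coe_range, ContinuousLinearMap.coe_coe]; exact this
  have hVanti : ∀ m n : ℕ, m ≤ n → V n ≤ V m := by
    intro m n hmn
    rintro x ⟨y, rfl⟩
    exact ⟨(T ^ (n - m)) y, by simp only [ContinuousLinearMap.coe_coe]; rw [← ContinuousLinearMap.mul_apply, ← pow_add,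
      Nat.add_sub_cancel' hmn]⟩
  by_cases hstab : ∃ n, V n ≤ V (n + 1)
  · -- stabilization: T is surjective, hence a unit, contradicting `l ∈ spectrum`
    obtain ⟨n, hn⟩ := hstab
    have hsurj : Function.Surjective T := by
      intro x
      obtain ⟨y, hy⟩ : (T ^ n) x ∈ V (n + 1) := hn ⟨x, rfl⟩
      refine ⟨y, ?_⟩
      simp only [ContinuousLinearMap.coe_coe] at hy
      have h2 : (T ^ n) (T y - x) = 0 := by
        rw [map_sub, show (T ^ n) (T y) = (T ^ (n+1)) y from by rw [pow_succ]; rfl, hy,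
          sub_self]
      have := hTninj n _ h2
      rwa [sub_eq_zero] at this
    have hker : LinearMap.ker (T : H →ₗ[ℂ] H) = ⊥ := by
      ext z
      simp only [LinearMap.mem_ker, Submodule.mem_bot]
      constructor
      · intro hz
        exact hTninj 1 z (by rwa [pow_one])
      · rintro rfl
        exact map_zero T
    have hrange : LinearMap.range (T : H →ₗ[ℂ] H) = ⊤ := LinearMap.range_eq_top.2 hsurj
    have hTunit : IsUnit T := by
      set e := ContinuousLinearEquiv.ofBijective T hker hrange with he
      refine isUnit_iff_exists.2 ⟨(e.symm : H →L[ℂ] H), ?_, ?_⟩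
      · ext x
        have h1 : (e : H →L[ℂ] H) (e.symm x) = x := e.apply_symm_apply x
        simpa [he, ContinuousLinearMap.mul_apply] using h1
      · ext x
        have h1 : e.symm ((e : H →L[ℂ] H) x) = x := e.symm_apply_apply x
        simpa [he, ContinuousLinearMap.mul_apply] using h1
    rw [spectrum.mem_iff] at hspec
    apply hspec
    have : algebraMap ℂ (H →L[ℂ] H) l - K = -T := by
      rw [hT, Algebra.algebraMap_eq_smul_one]
      abel
    rw [this]
    exact hTunit.neg
  · -- all inclusions strict: build separated sequence, contradiction with compactness
    push_neg at hstab
    have hlt : ∀ n, V (n + 1) < V n := fun n =>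
      lt_of_le_of_ne (hVanti n (n+1) (Nat.le_succ n)) (fun h => hstab n (le_of_eq h.symm))
    have hx : ∀ n : ℕ, ∃ x : H, x ∈ V n ∧ ‖x‖ = 1 ∧ x ∈ (V (n+1))ᗮ := fun n =>
      gmres_aux_exists_unit_orth (hVclosed (n+1)) (hlt n)
    choose x hxV hx1 hxOrth using hx
    have hTmem : ∀ n, T (x n) ∈ V (n + 1) := by
      intro n
      obtain ⟨y, hy⟩ := hxV n
      exact ⟨y, by rw [← hy]; simp only [ContinuousLinearMap.coe_coe]; rw [← ContinuousLinearMap.mul_apply, ← pow_succ']⟩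
    refine gmres_aux_no_separated_seq hK (fun n => (hx1 n).le)
      (r := ‖l‖) (norm_pos_iff.2 hl) ?_
    intro m n hmn
    have hKx : ∀ k, K (x k) = l • x k + T (x k) := by
      intro k; rw [hTapp]; abel
    have hw : T (x m) - T (x n) - l • x n ∈ V (m + 1) := by
      refine Submodule.sub_mem _ (Submodule.sub_mem _ (hTmem m) ?_) ?_
      · exact hVanti (m+1) (n+1) (by omega) (hTmem n)
      · exact hVanti (m+1) n (by omega) (Submodule.smul_mem _ _ (hxV n))
    have heq : K (x m) - K (x n) = l • x m + (T (x m) - T (x n) - l • x n) := by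
      rw [hKx, hKx]; abel
    rw [heq]
    have horth : inner (𝕜 := ℂ) (l • x m) (T (x m) - T (x n) - l • x n) = 0 := by
      have h0 : inner (𝕜 := ℂ) (x m) (T (x m) - T (x n) - l • x n) = 0 :=
        (Submodule.mem_orthogonal' _ _).1 (hxOrth m) _ hw
      rw [inner_smul_left, h0, mul_zero]
    calc ‖l‖ = ‖l • x m‖ := by rw [norm_smul, hx1 m, mul_one]
      _ ≤ ‖l • x m + (T (x m) - T (x n) - l • x n)‖ := gmres_aux_norm_le_of_orth horth

/-- The set of eigenvalues of modulus `≥ r > 0` of a compact operator is finite. -/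
lemma gmres_aux_eigenvalues_finite {K : H →L[ℂ] H} (hK : IsCompactOperator K)
    {r : ℝ} (hr : 0 < r) :
    {l : ℂ | r ≤ ‖l‖ ∧ ∃ x : H, x ≠ 0 ∧ K x = l • x}.Finite := by
  by_contra hinf
  rw [← Set.Infinite] at hinf
  set S := {l : ℂ | r ≤ ‖l‖ ∧ ∃ x : H, x ≠ 0 ∧ K x = l • x} with hS
  obtain f := hinf.natEmbedding
  set lam : ℕ → ℂ := fun n => (f n : ℂ) with hlam
  have hlaminj : Function.Injective lam :=
    Subtype.val_injective.comp f.injective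
  have hlamr : ∀ n, r ≤ ‖lam n‖ := fun n => (f n).2.1
  have hexe : ∀ n, ∃ x : H, x ≠ 0 ∧ K x = lam n • x := fun n => (f n).2.2
  choose e he0 heK using hexe
  have hli : LinearIndependent ℂ e := by
    refine Module.End.eigenvectors_linearIndependent' (K : H →ₗ[ℂ] H) lam hlaminj e ?_
    intro i
    refine ⟨Module.End.mem_eigenspace_iff.2 ?_, he0 i⟩
    simpa using heK i
  set V : ℕ → Submodule ℂ H := fun n => Submodule.span ℂ (e '' Set.Iio n) with hV
  have hVmono : ∀ m n : ℕ, m ≤ n → V m ≤ V n := fun m n hmn =>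
    Submodule.span_mono (Set.image_mono (fun i (hi : i < m) => lt_of_lt_of_le hi hmn))
  have hVfd : ∀ n, FiniteDimensional ℂ (V n) := fun n =>
    FiniteDimensional.span_of_finite ℂ ((Set.finite_Iio n).image e)
  have hVclosed : ∀ n, IsClosed ((V n : Set H)) := by
    intro n
    haveI := hVfd n
    exact Submodule.closed_of_finiteDimensional (V n)
  have hVlt : ∀ n, V n < V (n + 1) := by
    intro n
    refine lt_of_le_of_ne (hVmono n (n+1) (Nat.le_succ n)) (fun h => ?_)
    have hmem : e n ∈ V (n + 1) :=
      Submodule.subset_span ⟨n, Nat.lt_succ_self n, rfl⟩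
    rw [← h] at hmem
    exact hli.notMem_span_image (by simp : n ∉ Set.Iio n) hmem
  have hKV : ∀ j, ∀ v ∈ V j, K v ∈ V j := by
    intro j v hv
    refine Submodule.span_induction ?_ ?_ ?_ ?_ hv
    · rintro x ⟨i, hi, rfl⟩
      rw [heK i]
      exact Submodule.smul_mem _ _ (Submodule.subset_span ⟨i, hi, rfl⟩)
    · simp
    · intro a b _ _ ha hb
      rw [map_add]; exact Submodule.add_mem _ ha hb
    · intro a b _ hb
      rw [map_smul]; exact Submodule.smul_mem _ _ hb
  have hmap : ∀ n, ∀ v ∈ V (n + 1), K v - lam n • v ∈ V n := by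
    intro n v hv
    refine Submodule.span_induction ?_ ?_ ?_ ?_ hv
    · rintro x ⟨i, hi, rfl⟩
      rw [heK i, ← sub_smul]
      rcases Nat.lt_succ_iff_lt_or_eq.1 hi with hi' | rfl
      · exact Submodule.smul_mem _ _ (Submodule.subset_span ⟨i, hi', rfl⟩)
      · simp
    · simp
    · intro a b _ _ ha hb
      have : K (a + b) - lam n • (a + b) = (K a - lam n • a) + (K b - lam n • b) := by
        rw [map_add, smul_add]; abel
      rw [this]; exact Submodule.add_mem _ ha hb
    · intro a b _ hb
      have : K (a • b) - lam n • a • b = a • (K b - lam n • b) := by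
        rw [map_smul, smul_sub, smul_comm]
      rw [this]; exact Submodule.smul_mem _ _ hb
  have hx : ∀ n : ℕ, ∃ x : H, x ∈ V (n + 1) ∧ ‖x‖ = 1 ∧ x ∈ (V n)ᗮ := fun n =>
    gmres_aux_exists_unit_orth (hVclosed n) (hVlt n)
  choose x hxV hx1 hxOrth using hx
  refine gmres_aux_no_separated_seq hK (fun n => (hx1 n).le) hr ?_
  intro m n hmn
  rw [norm_sub_rev]
  have hw : (K (x n) - lam n • x n) - K (x m) ∈ V n := by
    refine Submodule.sub_mem _ (hmap n _ (hxV n)) ?_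
    exact hVmono (m+1) n hmn (hKV (m+1) _ (hxV m))
  have heq : K (x n) - K (x m) = lam n • x n + ((K (x n) - lam n • x n) - K (x m)) := by
    abel
  rw [heq]
  have horth : inner (𝕜 := ℂ) (lam n • x n) ((K (x n) - lam n • x n) - K (x m)) = 0 := by
    have h0 : inner (𝕜 := ℂ) (x n) ((K (x n) - lam n • x n) - K (x m)) = 0 :=
      (Submodule.mem_orthogonal' _ _).1 (hxOrth n) _ hw
    rw [inner_smul_left, h0, mul_zero]
  calc r ≤ ‖lam n‖ := hlamr n
    _ = ‖lam n • x n‖ := by rw [norm_smul, hx1 n, mul_one]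
    _ ≤ ‖lam n • x n + ((K (x n) - lam n • x n) - K (x m))‖ :=
        gmres_aux_norm_le_of_orth horth

/-- The spectrum of a compact operator outside any disk around `0` is finite. -/
lemma gmres_aux_spectrum_finite {K : H →L[ℂ] H} (hK : IsCompactOperator K)
    {r : ℝ} (hr : 0 < r) : {l ∈ spectrum ℂ K | r ≤ ‖l‖}.Finite := by
  refine (gmres_aux_eigenvalues_finite hK hr).subset ?_
  rintro l ⟨hl, hlr⟩
  have hl0 : l ≠ 0 := by
    intro h
    rw [h] at hlr
    simp at hlr
    linarith
  obtain ⟨x, hx0, hxK⟩ := gmres_aux_eigenvalue_of_mem_spectrum hK hl0 hl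
  exact ⟨hlr, x, hx0, hxK⟩

lemma gmres_aux_csInf_le (A : H →L[ℂ] H) (r₀ : H) {n : ℕ} {p : Polynomial ℂ}
    (h0 : p.coeff 0 = 1) (hd : p.natDegree ≤ n) :
    sInf {t : ℝ | ∃ p : Polynomial ℂ, p.coeff 0 = 1 ∧ p.natDegree ≤ n ∧
      t = ‖(Polynomial.aeval A p) r₀‖} ≤ ‖(Polynomial.aeval A p) r₀‖ := by
  refine csInf_le ⟨0, ?_⟩ ⟨p, h0, hd, rfl⟩
  rintro t ⟨q, _, _, rfl⟩
  exact norm_nonneg _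

end GmresAux

open Polynomial NNReal in
/-- GMRES converges superlinearly for `A = I + K` with `K` compact and `I + K` invertible:
the optimal Krylov (GMRES) residual after `n` steps is eventually bounded by `ε ^ n * ‖r₀‖`
for every `ε > 0`. -/
theorem gmres_superlinear_compact_perturbation
    {H : Type*} [NormedAddCommGroup H] [InnerProductSpace ℂ H] [CompleteSpace H]
    (K : H →L[ℂ] H) (hK : IsCompactOperator K) (hA : IsUnit (1 + K))
    (b x0 : H) :
    ∀ ε > (0 : ℝ), ∃ N : ℕ, ∀ n ≥ N,
      sInf {t : ℝ | ∃ p : Polynomial ℂ, p.coeff 0 = 1 ∧ p.natDegree ≤ n ∧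
        t = ‖(Polynomial.aeval (1 + K) p) (b - (1 + K) x0)‖}
      ≤ ε ^ n * ‖b - (1 + K) x0‖ := by
  intro ε hε
  set Aop : H →L[ℂ] H := 1 + K with hAop
  set r₀ : H := b - Aop x0 with hr₀def
  have hone : ∀ n : ℕ,
      sInf {t : ℝ | ∃ p : Polynomial ℂ, p.coeff 0 = 1 ∧ p.natDegree ≤ n ∧
        t = ‖(Polynomial.aeval Aop p) r₀‖} ≤ ‖r₀‖ := by
    intro n
    have := gmres_aux_csInf_le Aop r₀ (n := n) (p := 1) (by simp) (by simp)
    simpa using this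
  by_cases hr0 : r₀ = 0
  · refine ⟨0, fun n _ => ?_⟩
    calc sInf _ ≤ ‖r₀‖ := hone n
      _ = ε ^ n * ‖r₀‖ := by rw [hr0]; simp
  by_cases hε1 : 1 ≤ ε
  · refine ⟨0, fun n _ => ?_⟩
    calc sInf _ ≤ ‖r₀‖ := hone n
      _ ≤ ε ^ n * ‖r₀‖ :=
        le_mul_of_one_le_left (norm_nonneg _) (one_le_pow₀ hε1)
  push_neg at hε1
  haveI : Nontrivial H := ⟨⟨r₀, 0, hr0⟩⟩
  haveI : Nontrivial (H →L[ℂ] H) := ⟨1, 0, fun h => by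
    have := DFunLike.congr_fun h r₀
    simp at this
    exact hr0 this⟩
  -- spectrum facts
  have hA0 : (0 : ℂ) ∉ spectrum ℂ Aop := by
    rw [spectrum.zero_mem_iff]
    simpa using hA
  have hshift : ∀ μ : ℂ, μ ∈ spectrum ℂ Aop ↔ μ - 1 ∈ spectrum ℂ K := by
    intro μ
    have key : (algebraMap ℂ (H →L[ℂ] H)) μ - Aop = (algebraMap ℂ (H →L[ℂ] H)) (μ - 1) - K := by
      rw [map_sub, map_one, hAop]
      abel
    rw [spectrum.mem_iff, spectrum.mem_iff, key]
  set r : ℝ := ε / 2 with hrdef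
  have hrpos : 0 < r := by positivity
  have hFfin : {μ ∈ spectrum ℂ Aop | r ≤ ‖μ - 1‖}.Finite := by
    refine Set.Finite.subset (Set.Finite.image (fun l => 1 + l)
      (gmres_aux_spectrum_finite hK hrpos)) ?_
    rintro μ ⟨hμ, hμr⟩
    exact ⟨μ - 1, ⟨(hshift μ).1 hμ, hμr⟩, by ring⟩
  set F : Finset ℂ := hFfin.toFinset with hFdef
  set m : ℕ := F.card with hm
  have hFspec : ∀ μ ∈ F, μ ∈ spectrum ℂ Aop ∧ r ≤ ‖μ - 1‖ := by
    intro μ hμ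
    rwa [hFdef, Set.Finite.mem_toFinset] at hμ
  have hFne : ∀ μ ∈ F, μ ≠ 0 := fun μ hμ h => hA0 (h ▸ (hFspec μ hμ).1)
  set R : ℝ := ‖Aop‖ with hR
  have hRz : ∀ z ∈ spectrum ℂ Aop, ‖z‖ ≤ R := fun z hz => spectrum.norm_le_norm_of_mem hz
  set M : ℝ := ∏ μ ∈ F, (1 + R / ‖μ‖) with hM
  have hM1 : (1:ℝ) ≤ M := by
    have h := Finset.prod_le_prod (s := F) (f := fun _ => (1:ℝ)) (g := fun μ => 1 + R / ‖μ‖)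
      (by norm_num) (fun μ _ => by
        have : 0 ≤ R / ‖μ‖ := div_nonneg (norm_nonneg _) (norm_nonneg _)
        linarith)
    simpa using h
  set q : Polynomial ℂ := ∏ μ ∈ F, (1 - Polynomial.C μ⁻¹ * Polynomial.X) with hq
  have hqeval : ∀ z : ℂ, q.eval z = ∏ μ ∈ F, (1 - μ⁻¹ * z) := by
    intro z
    rw [hq, Polynomial.eval_prod]
    exact Finset.prod_congr rfl (fun μ _ => by simp)
  have hq0 : q.eval 0 = 1 := by
    rw [hqeval]; simp
  have hqF : ∀ μ ∈ F, q.eval μ = 0 := by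
    intro μ hμ
    rw [hqeval]
    exact Finset.prod_eq_zero hμ (by rw [inv_mul_cancel₀ (hFne μ hμ), sub_self])
  have hqbound : ∀ z ∈ spectrum ℂ Aop, ‖q.eval z‖ ≤ M := by
    intro z hz
    rw [hqeval, hM]
    calc ‖∏ μ ∈ F, (1 - μ⁻¹ * z)‖ = ∏ μ ∈ F, ‖1 - μ⁻¹ * z‖ := norm_prod _ _
      _ ≤ ∏ μ ∈ F, (1 + R / ‖μ‖) := by
          refine Finset.prod_le_prod (fun μ _ => norm_nonneg _) ?_
          intro μ hμ
          calc ‖1 - μ⁻¹ * z‖ ≤ ‖(1:ℂ)‖ + ‖μ⁻¹ * z‖ := norm_sub_le _ _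
            _ = 1 + ‖z‖ / ‖μ‖ := by
                rw [norm_one, norm_mul, norm_inv]
                ring
            _ ≤ 1 + R / ‖μ‖ := by
                have := hRz z hz
                have hμ0 : (0:ℝ) ≤ ‖μ‖ := norm_nonneg _
                gcongr
  have hqdeg : q.natDegree ≤ m := by
    rw [hq, hm]
    refine le_trans (Polynomial.natDegree_prod_le _ _) ?_
    refine le_trans (Finset.sum_le_card_nsmul _ _ 1 ?_) (by simp)
    intro μ _
    refine le_trans (Polynomial.natDegree_sub_le _ _) ?_
    simp only [Polynomial.natDegree_one, max_le_iff]
    exact ⟨Nat.zero_le _, le_trans (Polynomial.natDegree_mul_le)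
      (by simp)⟩
  -- choose k
  have hεm : (0:ℝ) < ε ^ m := pow_pos hε m
  obtain ⟨k₀, hk₀⟩ := pow_unbounded_of_one_lt (M / ε ^ m) (by norm_num : (1:ℝ) < 2)
  set k : ℕ := k₀ + 1 with hk
  have hk1 : 1 ≤ k := Nat.le_add_left 1 k₀
  have hk2 : M / ε ^ m < 2 ^ k := lt_trans hk₀ (by
    apply pow_lt_pow_right₀ (by norm_num : (1:ℝ) < 2) (Nat.lt_succ_self k₀))
  set d : ℕ := m + k with hd
  set c : ℝ := M * r ^ k with hc
  set η : ℝ := ε ^ d with hη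
  have hηpos : 0 < η := pow_pos hε d
  have hc0 : 0 ≤ c := mul_nonneg (by linarith) (pow_nonneg hrpos.le _)
  have hcη : c < η := by
    have h2k : (0:ℝ) < 2 ^ k := by positivity
    have hεk : (0:ℝ) < ε ^ k := pow_pos hε k
    have hk2' : M < 2 ^ k * ε ^ m := (div_lt_iff₀ hεm).1 hk2
    have hceq : c = M * ε ^ k / 2 ^ k := by
      rw [hc, hrdef, div_pow]; ring
    rw [hceq, hη, hd, div_lt_iff₀ h2k, show ε ^ (m + k) = ε ^ m * ε ^ k from pow_add ε m k]
    calc M * ε ^ k < 2 ^ k * ε ^ m * ε ^ k := mul_lt_mul_of_pos_right hk2' hεk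
      _ = ε ^ m * ε ^ k * 2 ^ k := by ring
  set p : Polynomial ℂ := q * (1 - Polynomial.X) ^ k with hp
  have hp0 : p.eval 0 = 1 := by
    rw [hp, Polynomial.eval_mul, hq0, Polynomial.eval_pow]
    simp
  have hpdeg : p.natDegree ≤ d := by
    rw [hp, hd]
    refine le_trans (Polynomial.natDegree_mul_le) (add_le_add hqdeg ?_)
    refine le_trans (Polynomial.natDegree_pow_le) ?_
    have h1 : (1 - Polynomial.X : Polynomial ℂ).natDegree ≤ 1 :=
      le_trans (Polynomial.natDegree_sub_le _ _) (by simp)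
    calc k * (1 - Polynomial.X : Polynomial ℂ).natDegree ≤ k * 1 := Nat.mul_le_mul_left k h1
      _ = k := Nat.mul_one k
  have hpbound : ∀ z ∈ spectrum ℂ Aop, ‖p.eval z‖ ≤ c := by
    intro z hz
    rw [hp, Polynomial.eval_mul, Polynomial.eval_pow]
    by_cases hzF : z ∈ F
    · rw [hqF z hzF, norm_mul, norm_zero, zero_mul]
      exact hc0
    · have hzr : ‖z - 1‖ < r := by
        by_contra hcon
        push_neg at hcon
        exact hzF (by rw [hFdef, Set.Finite.mem_toFinset]; exact ⟨hz, hcon⟩)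
      rw [norm_mul, norm_pow, hc]
      refine mul_le_mul (hqbound z hz) ?_ (by positivity) (by linarith)
      refine pow_le_pow_left₀ (norm_nonneg _) ?_ k
      rw [Polynomial.eval_sub, Polynomial.eval_one, Polynomial.eval_X, norm_sub_rev]
      exact hzr.le
  set θ : ℝ := (c + η) / 2 with hθ
  have hθc : c < θ := by rw [hθ]; linarith
  have hθη : θ < η := by rw [hθ]; linarith
  have hθpos : 0 < θ := by rw [hθ]; linarith
  set B : H →L[ℂ] H := Polynomial.aeval Aop p with hB
  have hρ : spectralRadius ℂ B < ((θ.toNNReal : ℝ≥0) : ENNReal) := by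
    refine spectrum.spectralRadius_lt_of_forall_lt (a := B) ?_
    intro z hz
    rw [hB, spectrum.map_polynomial_aeval] at hz
    obtain ⟨w, hw, rfl⟩ := hz
    rw [← NNReal.coe_lt_coe, coe_nnnorm, Real.coe_toNNReal _ hθpos.le]
    exact lt_of_le_of_lt (hpbound w hw) hθc
  have hGel := spectrum.pow_norm_pow_one_div_tendsto_nhds_spectralRadius B
  have hev : ∀ᶠ N : ℕ in Filter.atTop, ‖B ^ N‖ ^ (1 / (N:ℝ)) < θ := by
    have h1 : ∀ᶠ N : ℕ in Filter.atTop,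
        ENNReal.ofReal (‖B ^ N‖ ^ (1 / (N:ℝ))) < ENNReal.ofReal θ := by
      refine hGel.eventually_lt_const ?_
      rw [ENNReal.ofReal]
      exact hρ
    exact h1.mono (fun N hN => (ENNReal.ofReal_lt_ofReal_iff hθpos).1 hN)
  obtain ⟨N₀, hN₀⟩ := Filter.eventually_atTop.1 hev
  have hBpow : ∀ N, N₀ ≤ N → 1 ≤ N → ‖B ^ N‖ < θ ^ N := by
    intro N hN hN1
    have h1 := hN₀ N hN
    have hNne : (N:ℝ) ≠ 0 := Nat.cast_ne_zero.2 (by omega)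
    have h2 : (‖B ^ N‖ ^ (1/(N:ℝ))) ^ N < θ ^ N :=
      pow_lt_pow_left₀ h1 (Real.rpow_nonneg (norm_nonneg _) _) (by omega)
    calc ‖B ^ N‖ = (‖B ^ N‖ ^ (1/(N:ℝ))) ^ N := by
          rw [← Real.rpow_natCast (‖B ^ N‖ ^ (1/(N:ℝ))) N, ← Real.rpow_mul (norm_nonneg _),
            one_div, inv_mul_cancel₀ hNne, Real.rpow_one]
      _ < θ ^ N := h2
  set sq : ℝ := θ / η with hs
  have hs0 : 0 ≤ sq := by positivity
  have hs1 : sq < 1 := (div_lt_one hηpos).2 hθη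
  obtain ⟨N₁, hN₁⟩ := exists_pow_lt_of_lt_one hηpos hs1
  refine ⟨d * (max N₀ (max N₁ 1) + 1), fun n hn => ?_⟩
  have hdpos : 0 < d := by omega
  set N : ℕ := n / d with hN
  have hNge : max N₀ (max N₁ 1) + 1 ≤ N := by
    rw [hN, Nat.le_div_iff_mul_le hdpos]
    calc (max N₀ (max N₁ 1) + 1) * d = d * (max N₀ (max N₁ 1) + 1) := by ring
      _ ≤ n := hn
  have hNN₀ : N₀ ≤ N := by omega
  have hNN₁ : N₁ ≤ N := by omega
  have hN1 : 1 ≤ N := by omega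
  have hcoeff : (p ^ N).coeff 0 = 1 := by
    rw [Polynomial.coeff_zero_eq_eval_zero, Polynomial.eval_pow, hp0, one_pow]
  have hdegN : (p ^ N).natDegree ≤ n := by
    refine le_trans (Polynomial.natDegree_pow_le) ?_
    calc N * p.natDegree ≤ N * d := Nat.mul_le_mul_left N hpdeg
      _ = (n / d) * d := by rw [hN]
      _ ≤ n := Nat.div_mul_le_self n d
  refine le_trans (gmres_aux_csInf_le Aop r₀ hcoeff hdegN) ?_
  have hval : (Polynomial.aeval Aop (p ^ N)) r₀ = (B ^ N) r₀ := by
    rw [map_pow, hB]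
  rw [hval]
  have hθN : θ ^ N ≤ ε ^ n := by
    have hsN : sq ^ N ≤ η := le_trans (pow_le_pow_of_le_one hs0 hs1.le hNN₁) hN₁.le
    have hθeq : θ = sq * η := by rw [hs, div_mul_cancel₀ _ (ne_of_gt hηpos)]
    have hnlt : n < (N + 1) * d := by
      have h1 := Nat.div_add_mod n d
      have h2 := Nat.mod_lt n hdpos
      calc n = d * (n / d) + n % d := h1.symm
        _ < d * (n / d) + d := Nat.add_lt_add_left h2 _
        _ = (n / d + 1) * d := by ring
        _ = (N + 1) * d := by rw [hN]
    calc θ ^ N = sq ^ N * η ^ N := by rw [hθeq, mul_pow]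
      _ ≤ η * η ^ N := mul_le_mul_of_nonneg_right hsN (pow_nonneg hηpos.le N)
      _ = η ^ (N + 1) := by rw [pow_succ]; ring
      _ = ε ^ ((N + 1) * d) := by rw [hη, ← pow_mul, mul_comm d (N + 1)]
      _ ≤ ε ^ n := pow_le_pow_of_le_one hε.le hε1.le hnlt.le
  calc ‖(B ^ N) r₀‖ ≤ ‖B ^ N‖ * ‖r₀‖ := ContinuousLinearMap.le_opNorm _ _
    _ ≤ θ ^ N * ‖r₀‖ := mul_le_mul_of_nonneg_right (hBpow N hNN₀ hN1).le (norm_nonneg _)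
    _ ≤ ε ^ n * ‖r₀‖ := mul_le_mul_of_nonneg_right hθN (norm_nonneg _)
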